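/- Let X be a locally compact Hausdorff space that is a Cantor manifold with respect to an admissible class 𝒞 (no closed subset in 𝒞 separates X), assume X is not a strong Cantor manifold with respect to 𝒞, and assume no nonempty open subset of X belongs to 𝒞. Then X admits a representation X = ⋃_{i=0}^∞ F_i by proper closed subsets with ⋃_{i≠j}(F_i ∩ F_j) ∈ 𝒞, such that additionally: (i) no finite union of the F_i covers X; (ii) each F_i has nonempty interior; (iii) F_i ∩ int(F_j) = ∅ whenever i ≠ j. -/

import Mathlib

/-- `T` is an `F_σ`-subset of `S` (in the subspace `S`): a countable union of sets closed in `S`. -/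
def FsigmaIn {X : Type*} [TopologicalSpace X] (T S : Set X) : Prop :=
  T ⊆ S ∧ ∃ f : ℕ → Set X, (∀ n, ∃ c : Set X, IsClosed c ∧ f n = c ∩ S) ∧ T = ⋃ n, f n

/-- `X` is a strong Cantor manifold with respect to the class `C`. -/
def StrongCantorManifold (X : Type*) [TopologicalSpace X] (C : Set X → Prop) : Prop :=
  ¬ ∃ F : ℕ → Set X, (∀ i, IsClosed (F i) ∧ F i ≠ Set.univ) ∧ (⋃ i, F i) = Set.univ ∧
    C (⋃ i, ⋃ j, ⋃ (_ : i ≠ j), F i ∩ F j)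

/-- Proposition 4.8: a locally compact Cantor manifold with respect to an admissible class `C`
which is not a strong Cantor manifold with respect to `C`, and no nonempty open subset of which
is in `C`, admits a decomposition satisfying the extra conditions (i)-(iii). -/
theorem cantor_not_strong_decomposition {X : Type*} [TopologicalSpace X] [T2Space X]
    [LocallyCompactSpace X] (C : Set X → Prop)
    (hChomeo : ∀ S T : Set X, C S → Nonempty (S ≃ₜ T) → C T)
    (hCFsig : ∀ S T : Set X, C S → FsigmaIn T S → C T)
    (hCantor : ¬ ∃ A B : Set X, IsClosed A ∧ IsClosed B ∧ A ≠ Set.univ ∧ B ≠ Set.univ ∧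
      A ∪ B = Set.univ ∧ C (A ∩ B))
    (hNotStrong : ¬ StrongCantorManifold X C)
    (hOpen : ∀ U : Set X, IsOpen U → U.Nonempty → ¬ C U) :
    ∃ F : ℕ → Set X, (∀ i, IsClosed (F i) ∧ F i ≠ Set.univ) ∧ (⋃ i, F i) = Set.univ ∧
      C (⋃ i, ⋃ j, ⋃ (_ : i ≠ j), F i ∩ F j) ∧
      (∀ s : Finset ℕ, (⋃ i ∈ s, F i) ≠ Set.univ) ∧
      (∀ i, (interior (F i)).Nonempty) ∧
      (∀ i j, i ≠ j → F i ∩ interior (F j) = ∅) := by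
  classical
  obtain ⟨F, hF, hFcov, hFC⟩ := not_not.mp hNotStrong
  set Z : Set X := ⋃ i, ⋃ j, ⋃ (_ : i ≠ j), F i ∩ F j with hZdef
  -- X is nonempty
  have hXne : (Set.univ : Set X).Nonempty := by
    by_contra h
    rw [Set.not_nonempty_iff_eq_empty] at h
    exact (hF 0).2 (by rw [h]; exact Set.eq_empty_of_subset_empty (h ▸ Set.subset_univ _))
  -- closed subsets of C-sets are in C
  have hCsub : ∀ A S : Set X, C A → IsClosed S → S ⊆ A → C S := fun A S hCA hS hSA =>
    hCFsig A S hCA ⟨hSA, fun _ => S, fun _ => ⟨S, hS, (Set.inter_eq_left.mpr hSA).symm⟩,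
      (Set.iUnion_const S).symm⟩
  -- closed sets in C are nowhere dense
  have hnwd : ∀ S : Set X, IsClosed S → C S → interior S = ∅ := by
    intro S hS hCS
    by_contra h
    obtain ⟨x, hx⟩ : (interior S).Nonempty := Set.nonempty_iff_ne_empty.mpr h
    by_cases hSu : S = Set.univ
    · exact hOpen Set.univ isOpen_univ hXne (hSu ▸ hCS)
    · refine hCantor ⟨S, (interior S)ᶜ, hS, isOpen_interior.isClosed_compl, hSu, ?_, ?_, ?_⟩
      · intro h'
        exact (h' ▸ Set.mem_univ x : x ∈ (interior S)ᶜ) hx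
      · apply Set.eq_univ_of_forall
        intro y
        by_cases hy : y ∈ interior S
        · exact Or.inl (interior_subset hy)
        · exact Or.inr hy
      · exact hCsub S _ hCS (hS.inter isOpen_interior.isClosed_compl) Set.inter_subset_left
  have hZsub : ∀ i j, i ≠ j → F i ∩ F j ⊆ Z := by
    intro i j hij x hx
    exact Set.mem_iUnion.mpr ⟨i, Set.mem_iUnion.mpr ⟨j, Set.mem_iUnion.mpr ⟨hij, hx⟩⟩⟩
  -- finite unions of proper closed sets with pairwise intersections in Z never cover X
  have hfin : ∀ P : ℕ → Set X, (∀ i, IsClosed (P i) ∧ P i ≠ Set.univ) →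
      (∀ i j, i ≠ j → P i ∩ P j ⊆ Z) → ∀ s : Finset ℕ, (⋃ i ∈ s, P i) ≠ Set.univ := by
    intro P hP hPZ s
    induction s using Finset.strongInduction with
    | _ s ih =>
      intro hs
      rcases Finset.eq_empty_or_nonempty s with hse | hsne
      · rw [hse] at hs
        simp only [Finset.notMem_empty, Set.iUnion_of_empty, Set.iUnion_empty] at hs
        exact hXne.ne_empty hs.symm
      obtain ⟨i0, hi0⟩ := hsne
      by_cases hB : (⋃ i ∈ s.erase i0, P i) = Set.univ
      · exact ih _ (Finset.erase_ssubset hi0) hB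
      · refine hCantor ⟨P i0, ⋃ i ∈ s.erase i0, P i, (hP i0).1,
          (s.erase i0).finite_toSet.isClosed_biUnion (fun i _ => (hP i).1), (hP i0).2, hB, ?_, ?_⟩
        · have h1 : P i0 ∪ ⋃ i ∈ s.erase i0, P i = ⋃ i ∈ insert i0 (s.erase i0), P i :=
            (Finset.set_biUnion_insert i0 (s.erase i0) P).symm
          rw [h1, Finset.insert_erase hi0, hs]
        · refine hCsub Z _ hFC (((hP i0).1).inter
            ((s.erase i0).finite_toSet.isClosed_biUnion (fun i _ => (hP i).1))) ?_
          rintro x ⟨hx0, hx1⟩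
          simp only [Set.mem_iUnion] at hx1
          obtain ⟨i, his, hxi⟩ := hx1
          exact hPZ i0 i (Finset.ne_of_mem_erase his).symm ⟨hx0, hxi⟩
  -- Baire: complement of countable union of closed nowhere dense sets is dense
  have hdense : ∀ g : ℕ → Set X, (∀ n, IsClosed (g n)) → (∀ n, interior (g n) = ∅) →
      Dense (⋃ n, g n)ᶜ := by
    intro g hc hi
    rw [Set.compl_iUnion]
    exact dense_iInter_of_isOpen_nat (fun n => (hc n).isOpen_compl)
      (fun n => interior_eq_empty_iff_dense_compl.mp (hi n))
  -- Z has dense complement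
  have hWdense : Dense Zᶜ := by
    have hgc : ∀ n : ℕ, IsClosed (if (Nat.unpair n).1 ≠ (Nat.unpair n).2 then
        F (Nat.unpair n).1 ∩ F (Nat.unpair n).2 else ∅) := by
      intro n
      split
      · exact (hF _).1.inter (hF _).1
      · exact isClosed_empty
    have hZeq : Z = ⋃ n : ℕ, (if (Nat.unpair n).1 ≠ (Nat.unpair n).2 then
        F (Nat.unpair n).1 ∩ F (Nat.unpair n).2 else ∅) := by
      ext x
      simp only [hZdef, Set.mem_iUnion]
      constructor
      · rintro ⟨i, j, hij, hx⟩
        refine ⟨Nat.pair i j, ?_⟩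
        simp only [Nat.unpair_pair]
        rw [if_pos hij]
        exact hx
      · rintro ⟨n, hx⟩
        by_cases h : (Nat.unpair n).1 ≠ (Nat.unpair n).2
        · rw [if_pos h] at hx
          exact ⟨_, _, h, hx⟩
        · rw [if_neg h] at hx
          exact absurd hx (Set.notMem_empty x)
    rw [hZeq]
    refine hdense _ hgc ?_
    intro n
    split
    · next h =>
      exact hnwd _ ((hF _).1.inter (hF _).1)
        (hCsub Z _ hFC ((hF _).1.inter (hF _).1) (hZsub _ _ h))
    · simp
  -- the C-condition for any family with closed pieces and pairwise intersections in Z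
  have hCpairs : ∀ P : ℕ → Set X, (∀ i, IsClosed (P i)) → (∀ i j, i ≠ j → P i ∩ P j ⊆ Z) →
      C (⋃ i, ⋃ j, ⋃ (_ : i ≠ j), P i ∩ P j) := by
    intro P hPc hPZ
    refine hCFsig Z _ hFC ⟨?_, fun n =>
      (if (Nat.unpair n).1 ≠ (Nat.unpair n).2 then P (Nat.unpair n).1 ∩ P (Nat.unpair n).2
       else ∅) ∩ Z, fun n => ⟨_, ?_, rfl⟩, ?_⟩
    · intro x hx
      simp only [Set.mem_iUnion] at hx
      obtain ⟨i, j, hij, hx⟩ := hx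
      exact hPZ i j hij hx
    · split
      · exact (hPc _).inter (hPc _)
      · exact isClosed_empty
    · ext x
      simp only [Set.mem_iUnion, Set.mem_inter_iff]
      constructor
      · rintro ⟨i, j, hij, hx⟩
        refine ⟨Nat.pair i j, ?_⟩
        simp only [Nat.unpair_pair]
        rw [if_pos hij]
        exact ⟨hx, hPZ i j hij hx⟩
      · rintro ⟨n, hx⟩
        by_cases h : (Nat.unpair n).1 ≠ (Nat.unpair n).2
        · rw [if_pos h] at hx
          exact ⟨_, _, h, hx.1⟩
        · rw [if_neg h] at hx
          exact absurd hx.1 (Set.notMem_empty x)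
  -- the set of indices with nonempty interior is infinite
  set p : ℕ → Prop := fun n => (interior (F n)).Nonempty with hp
  have hpinf : (setOf p).Infinite := by
    by_contra hcon
    rw [Set.not_infinite] at hcon
    have hM : (⋃ i ∈ hcon.toFinset, F i) = Set.univ := by
      by_contra hM
      have hclosedM : IsClosed (⋃ i ∈ hcon.toFinset, F i) :=
        hcon.toFinset.finite_toSet.isClosed_biUnion fun i _ => (hF i).1
      have hne : ((⋃ i ∈ hcon.toFinset, F i)ᶜ).Nonempty := by
        rw [Set.nonempty_compl]; exact hM
      have hg'c : ∀ n : ℕ, IsClosed (if p n then (∅ : Set X) else F n) := by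
        intro n; split; exacts [isClosed_empty, (hF n).1]
      have hg'i : ∀ n : ℕ, interior (if p n then (∅ : Set X) else F n) = ∅ := by
        intro n; split
        · simp
        · next h => exact Set.not_nonempty_iff_eq_empty.mp h
      have hd := hdense _ hg'c hg'i
      obtain ⟨y, hy1, hy2⟩ := hd.inter_open_nonempty _ hclosedM.isOpen_compl hne
      have hyF : y ∈ ⋃ i, F i := hFcov ▸ Set.mem_univ y
      obtain ⟨n, hn⟩ := Set.mem_iUnion.mp hyF
      by_cases hpn : p n
      · exact hy1 (Set.mem_biUnion (hcon.mem_toFinset.mpr hpn) hn)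
      · exact hy2 (Set.mem_iUnion.mpr ⟨n, by rw [if_neg hpn]; exact hn⟩)
    exact hfin F hF hZsub hcon.toFinset hM
  -- enumerate the fat indices
  have hemem : ∀ n, p (Nat.nth p n) := fun n => Nat.nth_mem_of_infinite hpinf n
  have heinj : Function.Injective (Nat.nth p) := Nat.nth_injective hpinf
  have hesurj : ∀ m, p m → ∃ n, Nat.nth p n = m := by
    intro m hm
    have : m ∈ Set.range (Nat.nth p) := by
      rw [Nat.range_nth_of_infinite hpinf]; exact hm
    exact this
  -- the intermediate family G : every piece has nonempty interior
  set G : ℕ → Set X := fun n => F (Nat.nth p n) ∪ (if p n then ∅ else F n) with hGdef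
  have hGmem : ∀ n x, x ∈ G n → x ∈ F (Nat.nth p n) ∨ (¬ p n ∧ x ∈ F n) := by
    intro n x hx
    rcases hx with h | h
    · exact Or.inl h
    · by_cases hpn : p n
      · rw [if_pos hpn] at h; exact absurd h (Set.notMem_empty x)
      · rw [if_neg hpn] at h; exact Or.inr ⟨hpn, h⟩
  have hGclosed : ∀ n, IsClosed (G n) := by
    intro n
    refine (hF _).1.union ?_
    split
    exacts [isClosed_empty, (hF _).1]
  have hGproper : ∀ n, G n ≠ Set.univ := by
    intro n
    by_cases hpn : p n
    · simp only [hGdef, if_pos hpn, Set.union_empty]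
      exact (hF _).2
    · simp only [hGdef, if_neg hpn]
      intro hu
      have hne : Nat.nth p n ≠ n := fun h => hpn (h ▸ hemem n)
      exact hCantor ⟨F (Nat.nth p n), F n, (hF _).1, (hF _).1, (hF _).2, (hF _).2, hu,
        hCsub Z _ hFC ((hF _).1.inter (hF _).1) (hZsub _ _ hne)⟩
  have hGZ : ∀ n m, n ≠ m → G n ∩ G m ⊆ Z := by
    intro n m hnm x hx
    rcases hGmem n x hx.1 with h1 | ⟨hpn, h1⟩ <;> rcases hGmem m x hx.2 with h2 | ⟨hpm, h2⟩
    · exact hZsub _ _ (fun h => hnm (heinj h)) ⟨h1, h2⟩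
    · exact hZsub _ _ (fun h => hpm (by rw [← h]; exact hemem n)) ⟨h1, h2⟩
    · exact hZsub _ _ (fun h => hpn (by rw [h]; exact hemem m)) ⟨h1, h2⟩
    · exact hZsub _ _ hnm ⟨h1, h2⟩
  have hGint : ∀ n, (interior (G n)).Nonempty := by
    intro n
    have hsub : F (Nat.nth p n) ⊆ G n := Set.subset_union_left
    exact Set.Nonempty.mono (interior_mono hsub) (hemem n)
  have hGcov : (⋃ n, G n) = Set.univ := by
    apply Set.eq_univ_of_forall
    intro x
    have hxF : x ∈ ⋃ i, F i := hFcov ▸ Set.mem_univ x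
    obtain ⟨m, hm⟩ := Set.mem_iUnion.mp hxF
    by_cases hpm : p m
    · obtain ⟨n, hn⟩ := hesurj m hpm
      exact Set.mem_iUnion.mpr ⟨n, Or.inl (hn ▸ hm)⟩
    · refine Set.mem_iUnion.mpr ⟨m, Or.inr ?_⟩
      rw [if_neg hpm]
      exact hm
  -- the final family H
  set K : ℕ → Set X := fun n => closure (G n \ Z) with hKdef
  set D : Set X := (⋃ n, K n)ᶜ with hDdef
  set H : ℕ → Set X := fun n => K n ∪ (G n ∩ closure D) with hHdef
  have hKG : ∀ n, K n ⊆ G n := fun n =>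
    closure_minimal Set.diff_subset (hGclosed n)
  have hHG : ∀ n, H n ⊆ G n := fun n =>
    Set.union_subset (hKG n) Set.inter_subset_left
  have hHclosed : ∀ n, IsClosed (H n) :=
    fun n => isClosed_closure.union ((hGclosed n).inter isClosed_closure)
  have hHproper : ∀ n, H n ≠ Set.univ := by
    intro n hu
    exact hGproper n (Set.eq_univ_of_univ_subset (hu ▸ hHG n))
  have hHZ : ∀ i j, i ≠ j → H i ∩ H j ⊆ Z := by
    intro i j hij x hx
    exact hGZ i j hij ⟨hHG i hx.1, hHG j hx.2⟩
  have hHcov : (⋃ n, H n) = Set.univ := by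
    apply Set.eq_univ_of_forall
    intro x
    by_cases hxK : x ∈ ⋃ n, K n
    · obtain ⟨n, hn⟩ := Set.mem_iUnion.mp hxK
      exact Set.mem_iUnion.mpr ⟨n, Or.inl hn⟩
    · have hxG : x ∈ ⋃ n, G n := hGcov ▸ Set.mem_univ x
      obtain ⟨n, hn⟩ := Set.mem_iUnion.mp hxG
      exact Set.mem_iUnion.mpr ⟨n, Or.inr ⟨hn, subset_closure hxK⟩⟩
  -- interiors
  have hintGK : ∀ n, interior (G n) ⊆ K n := by
    intro n x hx
    rw [hKdef, mem_closure_iff]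
    intro O hO hxO
    have h1 : (O ∩ interior (G n)).Nonempty := ⟨x, hxO, hx⟩
    obtain ⟨y, hy1, hy2⟩ := hWdense.inter_open_nonempty _ (hO.inter isOpen_interior) h1
    exact ⟨y, hy1.1, interior_subset hy1.2, hy2⟩
  have hintH : ∀ n, (interior (H n)).Nonempty := by
    intro n
    have h1 : interior (G n) ⊆ H n := fun x hx => Or.inl (hintGK n hx)
    exact Set.Nonempty.mono (interior_maximal h1 isOpen_interior) (hGint n)
  have hintHK : ∀ n, interior (H n) ⊆ K n := by
    intro n x hx
    rw [hKdef, mem_closure_iff]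
    intro O hO hxO
    have h1 : (O ∩ interior (H n)).Nonempty := ⟨x, hxO, hx⟩
    obtain ⟨y, hy1, hy2⟩ := hWdense.inter_open_nonempty _ (hO.inter isOpen_interior) h1
    exact ⟨y, hy1.1, hHG n (interior_subset hy1.2), hy2⟩
  have hdisjH : ∀ i j, i ≠ j → H i ∩ interior (H j) = ∅ := by
    intro i j hij
    rw [Set.eq_empty_iff_forall_notMem]
    rintro x ⟨hxi, hxj⟩
    rcases hxi with hxi | hxi
    · -- x ∈ K i = closure (G i \ Z)
      have h1 := (mem_closure_iff.mp hxi) _ isOpen_interior hxj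
      obtain ⟨y, hy1, hy2⟩ := h1
      have hyK : y ∈ K j := hintHK j hy1
      exact hy2.2 (hGZ i j hij ⟨hy2.1, hKG j hyK⟩)
    · -- x ∈ G i ∩ closure D
      have h1 := (mem_closure_iff.mp hxi.2) _ isOpen_interior hxj
      obtain ⟨y, hy1, hy2⟩ := h1
      exact hy2 (Set.mem_iUnion.mpr ⟨j, hintHK j hy1⟩)
  exact ⟨H, fun n => ⟨hHclosed n, hHproper n⟩, hHcov, hCpairs H hHclosed hHZ,
    hfin H (fun n => ⟨hHclosed n, hHproper n⟩) hHZ, hintH, hdisjH⟩
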